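/- Let G be a graph on n vertices with e edges, where 0 < e < n(n-1)/2, and let G̅ be its complement. Then m·K_n can be partitioned into copies of G if and only if m·(n(n-1)/2 − e)/e · K_n can be partitioned into copies of G̅. (In particular, if l copies of G partition m·K_n, then the same l copies' complements partition (l−m)·K_n into copies of G̅.) -/

import Mathlib

/-- The edge multiset of the multigraph `m·K_V` can be partitioned into copies
of `G`. -/
def CanPartitionMultiKn {V : Type*} (G : SimpleGraph V) (m : ℕ) : Prop :=
  ∃ (l : ℕ) (H : Fin l → SimpleGraph V),
    (∀ i, Nonempty (H i ≃g G)) ∧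
    ∀ u v : V, u ≠ v → Nat.card {i : Fin l // (H i).Adj u v} = m

/-- Complement of a graph isomorphism. -/
def isoCompl {V W : Type*} {G : SimpleGraph V} {G' : SimpleGraph W} (f : G ≃g G') :
    Gᶜ ≃g G'ᶜ where
  toEquiv := f.toEquiv
  map_rel_iff' := by
    intro a b
    simp only [SimpleGraph.compl_adj, ne_eq, EmbeddingLike.apply_eq_iff_eq]
    exact and_congr Iff.rfl (not_congr f.map_rel_iff)

open Finset in
lemma aux_dir {V : Type*} [Fintype V] [DecidableEq V]
    (G : SimpleGraph V) (N e m m' : ℕ)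
    (hN : (⊤ : SimpleGraph V).edgeFinset.card = N)
    (he : Nat.card G.edgeSet = e)
    (he0 : 0 < e) (heN : e < N) (hm' : m' * e = m * (N - e))
    (h : CanPartitionMultiKn G m) : CanPartitionMultiKn Gᶜ m' := by
  classical
  obtain ⟨l, H, hiso, hcount⟩ := h
  rw [Nat.card_eq_fintype_card] at he
  -- each copy has e edges
  have hce : ∀ i, (H i).edgeFinset.card = e := by
    intro i
    rw [SimpleGraph.edgeFinset_card]
    exact (Fintype.card_congr (hiso i).some.mapEdgeSet).trans he
  -- double counting : l * e = m * N
  have h3 : ∀ s ∈ (⊤ : SimpleGraph V).edgeFinset,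
      (univ.filter fun i : Fin l => s ∈ (H i).edgeFinset).card = m := by
    intro s hs
    induction s with
    | h u v =>
      have huv : u ≠ v := by
        rw [SimpleGraph.mem_edgeFinset, SimpleGraph.mem_edgeSet] at hs
        exact hs.ne
      have := hcount u v huv
      rw [Nat.card_eq_fintype_card, Fintype.card_subtype] at this
      rw [← this]
      congr 1
      ext i
      simp [SimpleGraph.mem_edgeFinset, SimpleGraph.mem_edgeSet]
  have hsub : ∀ i, (H i).edgeFinset ⊆ (⊤ : SimpleGraph V).edgeFinset := fun i =>
    SimpleGraph.edgeFinset_mono le_top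
  have key : l * e = m * N := by
    calc l * e = ∑ i : Fin l, (H i).edgeFinset.card := by simp [hce, mul_comm]
      _ = ∑ i : Fin l, ((⊤ : SimpleGraph V).edgeFinset.filter
            fun s => s ∈ (H i).edgeFinset).card := by
          refine Finset.sum_congr rfl fun i _ => ?_
          congr 1
          rw [Finset.filter_mem_eq_inter, Finset.inter_eq_right.2 (hsub i)]
      _ = ∑ i : Fin l, ∑ s ∈ (⊤ : SimpleGraph V).edgeFinset,
            (if s ∈ (H i).edgeFinset then 1 else 0) := by
          simp only [Finset.card_filter]
      _ = ∑ s ∈ (⊤ : SimpleGraph V).edgeFinset, ∑ i : Fin l,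
            (if s ∈ (H i).edgeFinset then 1 else 0) := Finset.sum_comm
      _ = ∑ s ∈ (⊤ : SimpleGraph V).edgeFinset,
            (univ.filter fun i : Fin l => s ∈ (H i).edgeFinset).card := by
          simp only [Finset.card_filter]
      _ = ∑ _s ∈ (⊤ : SimpleGraph V).edgeFinset, m := Finset.sum_congr rfl h3
      _ = m * N := by rw [Finset.sum_const, hN, smul_eq_mul, mul_comm]
  have hml : m ≤ l := by
    have : m * e ≤ l * e := by
      calc m * e ≤ m * N := Nat.mul_le_mul_left m heN.le
        _ = l * e := key.symm
    exact Nat.le_of_mul_le_mul_right this he0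
  have hlm : l - m = m' := by
    have : (l - m) * e = m' * e := by
      rw [Nat.sub_mul, key, ← Nat.mul_sub, hm']
    exact Nat.eq_of_mul_eq_mul_right he0 this
  refine ⟨l, fun i => (H i)ᶜ, fun i => ⟨isoCompl (hiso i).some⟩, fun u v huv => ?_⟩
  rw [Nat.card_eq_fintype_card, Fintype.card_subtype]
  have hc : (univ.filter fun i : Fin l => (H i)ᶜ.Adj u v)
      = univ \ (univ.filter fun i : Fin l => (H i).Adj u v) := by
    ext i
    simp [SimpleGraph.compl_adj, huv]
  rw [hc, Finset.card_sdiff_of_subset (Finset.filter_subset _ _)]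
  have := hcount u v huv
  rw [Nat.card_eq_fintype_card, Fintype.card_subtype] at this
  rw [this, Finset.card_univ, Fintype.card_fin, hlm]

theorem partition_complement_iff {V : Type*} [Fintype V] [DecidableEq V]
    (G : SimpleGraph V) [DecidableRel G.Adj] (n e : ℕ)
    (hn : Fintype.card V = n) (he : G.edgeFinset.card = e)
    (he0 : 0 < e) (heN : e < n * (n - 1) / 2)
    (m m' : ℕ) (hm' : m' * e = m * (n * (n - 1) / 2 - e)) :
    CanPartitionMultiKn G m ↔ CanPartitionMultiKn Gᶜ m' := by
  classical
  set N := n * (n - 1) / 2 with hNdef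
  have hN : (⊤ : SimpleGraph V).edgeFinset.card = N := by
    rw [SimpleGraph.card_edgeFinset_top_eq_card_choose_two, hn, Nat.choose_two_right]
  have heSet : Nat.card G.edgeSet = e := by
    rw [Nat.card_eq_fintype_card, ← Set.toFinset_card]
    simpa [SimpleGraph.edgeFinset] using he
  -- complement edge count
  have hGc : Nat.card Gᶜ.edgeSet = N - e := by
    have hsub : G.edgeFinset ⊆ (⊤ : SimpleGraph V).edgeFinset :=
      SimpleGraph.edgeFinset_mono le_top
    have hdisj : Gᶜ.edgeFinset = (⊤ : SimpleGraph V).edgeFinset \ G.edgeFinset := by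
      ext s
      induction s with
      | h u v =>
        simp only [SimpleGraph.mem_edgeFinset, SimpleGraph.mem_edgeSet, Finset.mem_sdiff,
          SimpleGraph.compl_adj, SimpleGraph.top_adj]
    rw [Nat.card_eq_fintype_card, ← Set.toFinset_card]
    have h2 : Gᶜ.edgeSet.toFinset = Gᶜ.edgeFinset := rfl
    rw [h2, hdisj, Finset.card_sdiff_of_subset hsub, hN, he]
  constructor
  · intro h
    exact aux_dir G N e m m' hN heSet he0 heN hm' h
  · intro h
    have hres := aux_dir Gᶜ N (N - e) m' m hN hGc (by omega) (by omega)
      (by rw [Nat.sub_sub_self heN.le, hm']) h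
    rwa [compl_compl] at hres
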